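/- Let k be a field of characteristic not 2 or 3 and let (A,−) be an (m₁,m₂)-product algebra with S = Skew(A,−), Albert form Q, and ♮-map on S. Then there exists a unique k-algebra homomorphism θ: C⁺(S,Q) → End_k(A) from the even Clifford algebra of the quadratic space (S,Q) such that θ(st) = −L_s ∘ L_{t^♮} for all s,t ∈ S (where st denotes the product of s and t inside the Clifford algebra). -/
import Mathlib


open scoped TensorProduct

noncomputable section

universe u

/-- A unital, not necessarily associative, algebra with involution over a commutative ring. -/
structure AlgebraWithInvolution (R : Type u) [CommRing R] : Type (u + 1) where
  carrier : Type u
  [isNonAssocRing : NonAssocRing carrier]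
  [isModule : Module R carrier]
  [isSMulCommClass : SMulCommClass R carrier carrier]
  [isScalarTower : IsScalarTower R carrier carrier]
  invol : carrier →ₗ[R] carrier
  invol_one : invol 1 = 1
  invol_mul : ∀ x y : carrier, invol (x * y) = invol y * invol x
  invol_invol : ∀ x : carrier, invol (invol x) = x

namespace AlgebraWithInvolution

attribute [instance] isNonAssocRing isModule isSMulCommClass isScalarTower

instance {R : Type u} [CommRing R] : CoeSort (AlgebraWithInvolution R) (Type u) :=
  ⟨carrier⟩

variable {R : Type u} [CommRing R]

/-- The operator `V_{x,y} z = (x ȳ) z + (z ȳ) x − (z x̄) y` of a (candidate) structurable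
algebra. -/
def Vop (A : AlgebraWithInvolution R) (x y z : A) : A :=
  (x * A.invol y) * z + (z * A.invol y) * x - (z * A.invol x) * y

/-- `(A,−)` is a structurable algebra:
`[V_{x,y}, V_{z,w}] = V_{V_{x,y} z, w} − V_{z, V_{y,x} w}`. -/
def IsStructurable (A : AlgebraWithInvolution R) : Prop :=
  ∀ x y z w v : A,
    A.Vop x y (A.Vop z w v) - A.Vop z w (A.Vop x y v) =
      A.Vop (A.Vop x y z) w v - A.Vop z (A.Vop y x w) v

/-- An element `x` is conjugate-invertible if `V_{x,y} = id` for some `y`. -/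
def ConjInvertible (A : AlgebraWithInvolution R) (x : A) : Prop :=
  ∃ y : A, ∀ z : A, A.Vop x y z = z

/-- A structurable division algebra: every nonzero element is conjugate-invertible. -/
def IsStructurableDivisionAlgebra (A : AlgebraWithInvolution R) : Prop :=
  ∀ x : A, x ≠ 0 → A.ConjInvertible x

/-- The submodule of skew elements of an algebra with involution. -/
def skew (A : AlgebraWithInvolution R) : Submodule R A.carrier where
  carrier := {a | A.invol a = -a}
  add_mem' := by
    intro a b ha hb
    simp only [Set.mem_setOf_eq, map_add] at *
    rw [ha, hb, neg_add]
  zero_mem' := by simp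
  smul_mem' := by
    intro c a ha
    simp only [Set.mem_setOf_eq, map_smul] at *
    rw [ha, smul_neg]

/-- `ψ(x,y) = x ȳ − y x̄`. -/
def psi (A : AlgebraWithInvolution R) (x y : A) : A :=
  x * A.invol y - y * A.invol x

/-- Isomorphisms of algebras with involution. -/
structure Iso (A B : AlgebraWithInvolution R) where
  toLinearEquiv : A.carrier ≃ₗ[R] B.carrier
  map_mul : ∀ x y : A, toLinearEquiv (x * y) = toLinearEquiv x * toLinearEquiv y
  map_one : toLinearEquiv 1 = 1
  map_invol : ∀ x : A, toLinearEquiv (A.invol x) = B.invol (toLinearEquiv x)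

/-- Isotopies of (structurable) algebras with involution: pairs `(α, α̂)` of linear
bijections with `α ∘ V_{x,y} ∘ α⁻¹ = V_{α x, α̂ y}`. -/
structure Isotopy (A B : AlgebraWithInvolution R) where
  toLinearEquiv : A.carrier ≃ₗ[R] B.carrier
  hat : A.carrier ≃ₗ[R] B.carrier
  map_Vop : ∀ x y z : A,
    toLinearEquiv (A.Vop x y z) = B.Vop (toLinearEquiv x) (hat y) (toLinearEquiv z)

/-- Two algebras with involution are isotopic if there is an isotopy between them. -/
def IsIsotopic (A B : AlgebraWithInvolution R) : Prop :=
  Nonempty (A.Isotopy B)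

/-- The tensor product of two algebras with involution. -/
def tensor (A B : AlgebraWithInvolution R) : AlgebraWithInvolution R where
  carrier := A.carrier ⊗[R] B.carrier
  invol := TensorProduct.map A.invol B.invol
  invol_one := by
    simp [Algebra.TensorProduct.one_def, A.invol_one, B.invol_one]
  invol_mul := by
    intro x y
    induction x with
    | zero => simp
    | tmul a b =>
      induction y with
      | zero => simp
      | tmul c d =>
        simp [Algebra.TensorProduct.tmul_mul_tmul, A.invol_mul, B.invol_mul]
      | add u v hu hv =>
        simp only [mul_add, map_add, hu, hv, add_mul]
    | add u v hu hv =>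
      simp only [add_mul, map_add, hu, hv, mul_add]
  invol_invol := by
    intro x
    induction x with
    | zero => simp
    | tmul a b => simp [A.invol_invol, B.invol_invol]
    | add u v hu hv => simp [hu, hv]

/-- Base change of an algebra with involution along `R → S`. -/
def baseChange (A : AlgebraWithInvolution R) (S : Type u) [CommRing S] [Algebra R S] :
    AlgebraWithInvolution S where
  carrier := S ⊗[R] A.carrier
  invol := LinearMap.baseChange S A.invol
  invol_one := by
    simp [Algebra.TensorProduct.one_def, A.invol_one]
  invol_mul := by
    intro x y
    induction x with
    | zero => simp
    | tmul s a =>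
      induction y with
      | zero => simp
      | tmul t b =>
        simp only [Algebra.TensorProduct.tmul_mul_tmul, LinearMap.baseChange_tmul,
          A.invol_mul, mul_comm s t]
      | add u v hu hv =>
        simp only [mul_add, map_add, hu, hv, add_mul]
    | add u v hu hv =>
      simp only [add_mul, map_add, hu, hv, mul_add]
  invol_invol := by
    intro x
    induction x with
    | zero => simp
    | tmul s a => simp [A.invol_invol]
    | add u v hu hv => simp [hu, hv]

end AlgebraWithInvolution

/-- A composition algebra over a field `F`: a unital (possibly non-associative) algebra with a
nondegenerate multiplicative quadratic form, together with its standard involution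
`x̄ = b(x,1)·1 − x` (where `b` is the polar form of the norm). -/
structure CompositionAlgebra (F : Type u) [Field F] : Type (u + 1) where
  carrier : Type u
  [isNonAssocRing : NonAssocRing carrier]
  [isModule : Module F carrier]
  [isSMulCommClass : SMulCommClass F carrier carrier]
  [isScalarTower : IsScalarTower F carrier carrier]
  [isFinite : FiniteDimensional F carrier]
  norm : QuadraticForm F carrier
  norm_one : norm 1 = 1
  norm_mul : ∀ x y : carrier, norm (x * y) = norm x * norm y
  nondegenerate : ∀ x : carrier, (∀ y : carrier, norm (x + y) - norm x - norm y = 0) → x = 0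
  conj : carrier →ₗ[F] carrier
  conj_def : ∀ x : carrier, conj x = (norm (x + 1) - norm x - norm 1) • (1 : carrier) - x
  conj_one : conj 1 = 1
  conj_mul : ∀ x y : carrier, conj (x * y) = conj y * conj x
  conj_conj : ∀ x : carrier, conj (conj x) = x

namespace CompositionAlgebra

attribute [instance] isNonAssocRing isModule isSMulCommClass isScalarTower isFinite

variable {F : Type u} [Field F]

/-- A composition algebra, viewed as an algebra with its standard involution. -/
def toAWI (C : CompositionAlgebra F) : AlgebraWithInvolution F where
  carrier := C.carrier
  invol := C.conj
  invol_one := C.conj_one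
  invol_mul := C.conj_mul
  invol_invol := C.conj_conj

end CompositionAlgebra

/-- A splitting datum witnessing that `(A,−)` is an `(m₁, m₂)`-product algebra: a field
extension `K/k` over which `(A,−)` becomes isomorphic, as an algebra with involution, to the
tensor product of two composition algebras (with their standard involutions) of dimensions
`m₁` and `m₂`. -/
structure ProductAlgebraSplitting {k : Type u} [Field k]
    (A : AlgebraWithInvolution k) (m₁ m₂ : ℕ) : Type (u + 1) where
  K : Type u
  [fieldK : Field K]
  [algK : Algebra k K]
  C₁ : CompositionAlgebra K
  C₂ : CompositionAlgebra K
  finrank₁ : Module.finrank K C₁.carrier = m₁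
  finrank₂ : Module.finrank K C₂.carrier = m₂
  iso : (A.baseChange K).Iso (C₁.toAWI.tensor C₂.toAWI)

attribute [instance] ProductAlgebraSplitting.fieldK ProductAlgebraSplitting.algK

/-- `(A,−)` is an `(m₁, m₂)`-product algebra. -/
def IsProductAlgebra {k : Type u} [Field k] (A : AlgebraWithInvolution k) (m₁ m₂ : ℕ) : Prop :=
  Nonempty (ProductAlgebraSplitting A m₁ m₂)

/-- An Albert form of an `(m₁,m₂)`-product algebra `(A,−)`: a quadratic form `Q` on the space
of skew elements, together with the `♮`-map, satisfying `L_s ∘ L_{s♮} = −Q(s)·id` and such that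
`Q(s) ≠ 0` iff left multiplication by `s` is invertible. -/
structure AlbertForm {k : Type u} [Field k] (A : AlgebraWithInvolution k) where
  Q : QuadraticForm k A.skew
  natMap : A.skew →ₗ[k] A.skew
  mul_natMap : ∀ (s : A.skew) (a : A.carrier),
    (s : A.carrier) * ((natMap s : A.carrier) * a) = -(Q s) • a
  nonzero_iff : ∀ s : A.skew,
    Q s ≠ 0 ↔ Function.Bijective fun a : A.carrier => (s : A.carrier) * a

end

/-! ### Auxiliary lemmas -/

section CompositionAlgebraLemmas

open QuadraticMap

namespace CompositionAlgebra

variable {F : Type u} [Field F] (C : CompositionAlgebra F)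

theorem polar_mul_right (x z y : C.carrier) :
    polar C.norm (x * y) (z * y) = polar C.norm x z * C.norm y := by
  have h := C.norm_mul (x + z) y
  simp only [add_mul] at h
  simp only [QuadraticMap.polar, C.norm_mul]
  rw [h]; ring

theorem polar_mul_left (x y w : C.carrier) :
    polar C.norm (x * y) (x * w) = C.norm x * polar C.norm y w := by
  have h := C.norm_mul x (y + w)
  simp only [mul_add] at h
  simp only [QuadraticMap.polar, C.norm_mul]
  rw [h]; ring

theorem polar_four (x y z w : C.carrier) :
    polar C.norm (x * y) (z * w) + polar C.norm (x * w) (z * y)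
      = polar C.norm x z * polar C.norm y w := by
  have h := C.polar_mul_right x z (y + w)
  simp only [mul_add, QuadraticMap.polar_add_left, QuadraticMap.polar_add_right] at h
  have h1 := C.polar_mul_right x z y
  have h2 := C.polar_mul_right x z w
  simp only [QuadraticMap.polar] at *
  linear_combination h - h1 - h2

theorem conj_eq (x : C.carrier) :
    C.conj x = polar C.norm x 1 • (1 : C.carrier) - x := by
  rw [C.conj_def x]
  simp [QuadraticMap.polar, C.norm_one]

theorem polar_assoc (x y z : C.carrier) :
    polar C.norm (x * y) z = polar C.norm y (C.conj x * z) := by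
  have h := C.polar_four 1 y x z
  simp only [one_mul] at h
  rw [C.conj_eq x, sub_mul, smul_mul_assoc, one_mul]
  rw [QuadraticMap.polar_comm _ (x * y) z]
  have h2 : polar C.norm y (polar C.norm x 1 • z - x * z)
      = polar C.norm x 1 * polar C.norm y z - polar C.norm y (x * z) := by
    rw [QuadraticMap.polar_sub_right, QuadraticMap.polar_smul_right]
    simp [smul_eq_mul]
  rw [h2]
  rw [QuadraticMap.polar_comm _ 1 x] at h
  linear_combination h

theorem conj_mul_mul (x y : C.carrier) :
    C.conj x * (x * y) = C.norm x • y := by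
  have key : ∀ z, polar C.norm (C.conj x * (x * y) - C.norm x • y) z = 0 := by
    intro z
    rw [QuadraticMap.polar_sub_left, QuadraticMap.polar_smul_left]
    have h1 : polar C.norm (C.conj x * (x * y)) z = polar C.norm (x * y) (x * z) := by
      have := C.polar_assoc (C.conj x) (x * y) z
      rw [C.conj_conj] at this
      exact this
    rw [h1, C.polar_mul_left, smul_eq_mul]
    ring
  have := C.nondegenerate (C.conj x * (x * y) - C.norm x • y) (fun z => key z)
  rwa [sub_eq_zero] at this

theorem mul_left_injective {x : C.carrier} (hx : C.norm x ≠ 0) :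
    Function.Injective (fun y : C.carrier => x * y) := by
  intro y₁ y₂ h
  have h2 : C.conj x * (x * y₁) = C.conj x * (x * y₂) := by
    simp only at h; rw [h]
  rw [C.conj_mul_mul, C.conj_mul_mul] at h2
  exact smul_right_injective C.carrier hx h2

end CompositionAlgebra

end CompositionAlgebraLemmas

section SkewSpanLemmas

open QuadraticMap

namespace CompositionAlgebra

variable {F : Type u} [Field F] (C : CompositionAlgebra F)

theorem one_ne_zero' : (1 : C.carrier) ≠ 0 := by
  intro h
  have h1 : C.norm 1 = 1 := C.norm_one
  rw [h, QuadraticMap.map_zero] at h1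
  exact one_ne_zero h1.symm

theorem skew_trace_zero {c : C.carrier} (hc : C.conj c = -c) :
    polar C.norm c 1 = 0 := by
  have h := C.conj_eq c
  rw [hc] at h
  have h2 : polar C.norm c 1 • (1 : C.carrier) = 0 := by
    have := h.symm
    rw [sub_eq_neg_add] at this
    -- -c = polar • 1 - c  →  polar • 1 = 0
    have : polar C.norm c 1 • (1 : C.carrier) - c = -c := h.symm
    linear_combination (norm := module) this
  rcases smul_eq_zero.mp h2 with h3 | h3
  · exact h3
  · exact absurd h3 C.one_ne_zero'

theorem skew_add {c d : C.carrier} (hc : C.conj c = -c) (hd : C.conj d = -d) :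
    C.conj (c + d) = -(c + d) := by
  rw [map_add, hc, hd, neg_add]

theorem skew_smul {c : C.carrier} (a : F) (hc : C.conj c = -c) :
    C.conj (a • c) = -(a • c) := by
  rw [_root_.map_smul, hc, smul_neg]

/-- Anisotropic skew vectors span the skew vectors. -/
theorem skew_mem_span_aniso (h2 : (2 : F) ≠ 0) {c : C.carrier} (hc : C.conj c = -c) :
    c ∈ Submodule.span F {x : C.carrier | C.conj x = -x ∧ C.norm x ≠ 0} := by
  by_cases hiso : ∀ x : C.carrier, C.conj x = -x → C.norm x = 0
  · -- all skew vectors isotropic: then the polar form vanishes against `c`, so `c = 0`.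
    have hpol : ∀ x, C.conj x = -x → polar C.norm c x = 0 := by
      intro x hx
      have h0 : C.norm (c + x) = 0 := hiso _ (C.skew_add hc hx)
      simp only [QuadraticMap.polar, h0, hiso c hc, hiso x hx]
      ring
    have hall : ∀ z : C.carrier, polar C.norm c z = 0 := by
      intro z
      have hzskew : C.conj (z - (2:F)⁻¹ • polar C.norm z 1 • (1 : C.carrier))
          = -(z - (2:F)⁻¹ • polar C.norm z 1 • (1 : C.carrier)) := by
        rw [_root_.map_sub, _root_.map_smul, _root_.map_smul, C.conj_one, C.conj_eq z]
        have h3 : polar C.norm z 1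
            = (2:F)⁻¹ * polar C.norm z 1 + (2:F)⁻¹ * polar C.norm z 1 := by
          field_simp
          ring
        linear_combination (norm := module)
          congrArg (fun a : F => a • (1 : C.carrier)) h3
      have hz1 := hpol _ hzskew
      rw [QuadraticMap.polar_sub_right, QuadraticMap.polar_smul_right,
        QuadraticMap.polar_smul_right] at hz1
      have hc1 := C.skew_trace_zero hc
      rw [hc1] at hz1
      simpa using hz1
    have : c = 0 := by
      apply C.nondegenerate
      intro y
      exact hall y
    rw [this]
    exact Submodule.zero_mem _
  · push_neg at hiso
    obtain ⟨w, hw, hnw⟩ := hiso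
    by_cases hnc : C.norm c ≠ 0
    · exact Submodule.subset_span ⟨hc, hnc⟩
    push_neg at hnc
    have hexp : ∀ a : F, C.norm (c + a • w)
        = a * (polar C.norm c w + a * C.norm w) := by
      intro a
      have h1 : C.norm (c + a • w) = C.norm c + C.norm (a • w) + polar C.norm c (a • w) := by
        simp only [QuadraticMap.polar]; ring
      rw [h1, QuadraticMap.polar_smul_right, QuadraticMap.map_smul, hnc]
      simp [smul_eq_mul]
      ring
    have key : ∃ a : F, a ≠ 0 ∧ C.norm (c + a • w) ≠ 0 := by
      by_cases hpw : polar C.norm c w + C.norm w ≠ 0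
      · exact ⟨1, one_ne_zero, by rw [hexp]; simpa using hpw⟩
      · push_neg at hpw
        refine ⟨2, h2, ?_⟩
        rw [hexp]
        have : polar C.norm c w = -C.norm w := by linear_combination hpw
        rw [this]
        intro hcon
        rcases mul_eq_zero.mp hcon with h | h
        · exact h2 h
        · have : (2:F) * C.norm w = C.norm w + C.norm w := by ring
          rw [show -C.norm w + 2 * C.norm w = C.norm w by ring] at h
          exact hnw h
    obtain ⟨a, ha0, hna⟩ := key
    have hmem1 : c + a • w ∈ Submodule.span F
        {x : C.carrier | C.conj x = -x ∧ C.norm x ≠ 0} :=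
      Submodule.subset_span ⟨C.skew_add hc (C.skew_smul a hw), hna⟩
    have hmem2 : w ∈ Submodule.span F {x : C.carrier | C.conj x = -x ∧ C.norm x ≠ 0} :=
      Submodule.subset_span ⟨hw, hnw⟩
    have : c = (c + a • w) - a • w := by abel
    rw [this]
    exact Submodule.sub_mem _ hmem1 (Submodule.smul_mem _ a hmem2)

end CompositionAlgebra

end SkewSpanLemmas

section TensorLemmas

open scoped TensorProduct
open QuadraticMap

namespace CompositionAlgebra

variable {K : Type u} [Field K] (C₁ C₂ : CompositionAlgebra K)

theorem tmul_one_mul_cancel (x : C₁.carrier) (z : C₁.carrier ⊗[K] C₂.carrier) :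
    (C₁.conj x ⊗ₜ[K] (1 : C₂.carrier)) * ((x ⊗ₜ[K] (1 : C₂.carrier)) * z)
      = C₁.norm x • z := by
  induction z with
  | zero => simp
  | tmul c d =>
    rw [Algebra.TensorProduct.tmul_mul_tmul, Algebra.TensorProduct.tmul_mul_tmul,
      C₁.conj_mul_mul, one_mul, one_mul, TensorProduct.smul_tmul']
  | add u v hu hv =>
    simp only [mul_add, hu, hv, smul_add]

theorem one_tmul_mul_cancel (y : C₂.carrier) (z : C₁.carrier ⊗[K] C₂.carrier) :
    ((1 : C₁.carrier) ⊗ₜ[K] C₂.conj y) * (((1 : C₁.carrier) ⊗ₜ[K] y) * z)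
      = C₂.norm y • z := by
  induction z with
  | zero => simp
  | tmul c d =>
    rw [Algebra.TensorProduct.tmul_mul_tmul, Algebra.TensorProduct.tmul_mul_tmul,
      C₂.conj_mul_mul, one_mul, one_mul, TensorProduct.tmul_smul]
  | add u v hu hv =>
    simp only [mul_add, hu, hv, smul_add]

theorem tmul_one_mul_injective {x : C₁.carrier} (hx : C₁.norm x ≠ 0) :
    Function.Injective
      (fun z : C₁.carrier ⊗[K] C₂.carrier => (x ⊗ₜ[K] (1 : C₂.carrier)) * z) := by
  intro z₁ z₂ h
  simp only at h
  have h2 := congrArg (fun w => (C₁.conj x ⊗ₜ[K] (1 : C₂.carrier)) * w) h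
  simp only [tmul_one_mul_cancel] at h2
  exact smul_right_injective _ hx h2

theorem one_tmul_mul_injective {y : C₂.carrier} (hy : C₂.norm y ≠ 0) :
    Function.Injective
      (fun z : C₁.carrier ⊗[K] C₂.carrier => ((1 : C₁.carrier) ⊗ₜ[K] y) * z) := by
  intro z₁ z₂ h
  simp only at h
  have h2 := congrArg (fun w => ((1 : C₁.carrier) ⊗ₜ[K] C₂.conj y) * w) h
  simp only [one_tmul_mul_cancel] at h2
  exact smul_right_injective _ hy h2

/-- The generating set of anisotropic skew simple tensors. -/
def anisoSet : Set (C₁.carrier ⊗[K] C₂.carrier) :=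
  {w | ∃ x : C₁.carrier, C₁.conj x = -x ∧ C₁.norm x ≠ 0 ∧ w = x ⊗ₜ[K] (1 : C₂.carrier)} ∪
  {w | ∃ y : C₂.carrier, C₂.conj y = -y ∧ C₂.norm y ≠ 0 ∧ w = (1 : C₁.carrier) ⊗ₜ[K] y}

theorem sub_conj_mem_span (h2 : (2 : K) ≠ 0) (z : C₁.carrier ⊗[K] C₂.carrier) :
    z - TensorProduct.map C₁.conj C₂.conj z ∈
      Submodule.span K (anisoSet C₁ C₂) := by
  induction z with
  | zero => simp
  | tmul x y =>
    rw [TensorProduct.map_tmul]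
    set tx := polar C₁.norm x 1 with htx
    set ty := polar C₂.norm y 1 with hty
    have hxm : C₁.conj (x - ((2:K)⁻¹ * tx) • 1) = -(x - ((2:K)⁻¹ * tx) • 1) := by
      rw [_root_.map_sub, _root_.map_smul, C₁.conj_one, C₁.conj_eq x]
      have h3 : tx = (2:K)⁻¹ * tx + (2:K)⁻¹ * tx := by field_simp; ring
      linear_combination (norm := module)
        congrArg (fun a : K => a • (1 : C₁.carrier)) h3
    have hym : C₂.conj (y - ((2:K)⁻¹ * ty) • 1) = -(y - ((2:K)⁻¹ * ty) • 1) := by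
      rw [_root_.map_sub, _root_.map_smul, C₂.conj_one, C₂.conj_eq y]
      have h3 : ty = (2:K)⁻¹ * ty + (2:K)⁻¹ * ty := by field_simp; ring
      linear_combination (norm := module)
        congrArg (fun a : K => a • (1 : C₂.carrier)) h3
    have heq : x ⊗ₜ[K] y - C₁.conj x ⊗ₜ[K] C₂.conj y
        = tx • ((1 : C₁.carrier) ⊗ₜ[K] (y - ((2:K)⁻¹ * ty) • 1))
          + ty • ((x - ((2:K)⁻¹ * tx) • 1) ⊗ₜ[K] (1 : C₂.carrier)) := by
      rw [C₁.conj_eq x, C₂.conj_eq y, ← htx, ← hty]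
      simp only [TensorProduct.sub_tmul, TensorProduct.tmul_sub,
        TensorProduct.smul_tmul, TensorProduct.tmul_smul, smul_smul, smul_sub, smul_add]
      have h4 : tx * ((2:K)⁻¹ * ty) + ty * ((2:K)⁻¹ * tx) = tx * ty := by
        field_simp; ring
      linear_combination (norm := module)
        congrArg (fun a : K => a • ((1 : C₁.carrier) ⊗ₜ[K] (1 : C₂.carrier))) h4
    rw [heq]
    have hmem1 : (1 : C₁.carrier) ⊗ₜ[K] (y - ((2:K)⁻¹ * ty) • 1) ∈
        Submodule.span K (anisoSet C₁ C₂) := by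
      have hy' := C₂.skew_mem_span_aniso h2 hym
      have := Submodule.mem_map_of_mem
        (f := (TensorProduct.mk K C₁.carrier C₂.carrier) 1) hy'
      rw [Submodule.map_span] at this
      refine Submodule.span_mono ?_ this
      rintro w ⟨y', ⟨hy1, hy2⟩, rfl⟩
      exact Or.inr ⟨y', hy1, hy2, rfl⟩
    have hmem2 : (x - ((2:K)⁻¹ * tx) • 1) ⊗ₜ[K] (1 : C₂.carrier) ∈
        Submodule.span K (anisoSet C₁ C₂) := by
      have hx' := C₁.skew_mem_span_aniso h2 hxm
      have := Submodule.mem_map_of_mem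
        (f := (TensorProduct.mk K C₁.carrier C₂.carrier).flip 1) hx'
      rw [Submodule.map_span] at this
      refine Submodule.span_mono ?_ this
      rintro w ⟨x', ⟨hx1, hx2⟩, rfl⟩
      exact Or.inl ⟨x', hx1, hx2, rfl⟩
    exact Submodule.add_mem _ (Submodule.smul_mem _ _ hmem1)
      (Submodule.smul_mem _ _ hmem2)
  | add u v hu hv =>
    rw [map_add]
    have : u + v - (TensorProduct.map C₁.conj C₂.conj u
        + TensorProduct.map C₁.conj C₂.conj v)
        = (u - TensorProduct.map C₁.conj C₂.conj u)
          + (v - TensorProduct.map C₁.conj C₂.conj v) := by abel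
    rw [this]
    exact Submodule.add_mem _ hu hv

theorem skew_tensor_mem_span (h2 : (2 : K) ≠ 0) {z : C₁.carrier ⊗[K] C₂.carrier}
    (hz : TensorProduct.map C₁.conj C₂.conj z = -z) :
    z ∈ Submodule.span K (anisoSet C₁ C₂) := by
  have h := sub_conj_mem_span C₁ C₂ h2 z
  rw [hz, sub_neg_eq_add] at h
  have hzz : z = (2:K)⁻¹ • (z + z) := by
    rw [← two_smul K z, smul_smul]
    rw [inv_mul_cancel₀ h2, one_smul]
  rw [hzz]
  exact Submodule.smul_mem _ _ h

end CompositionAlgebra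

end TensorLemmas

section MoreLemmas

open scoped TensorProduct

/-- Over a field with `2 ≠ 0` and `3 ≠ 0`, for every quadratic polynomial with nonzero
leading coefficient there are two distinct points where it does not vanish. -/
theorem exists_two_lambda {k : Type u} [Field k] (hk2 : (2 : k) ≠ 0) (hk3 : (3 : k) ≠ 0)
    (a b c : k) (hc : c ≠ 0) :
    ∃ x y : k, x ≠ y ∧ a + b * x + c * x ^ 2 ≠ 0 ∧ a + b * y + c * y ^ 2 ≠ 0 := by
  have vand : ∀ x y z : k, a + b * x + c * x ^ 2 = 0 → a + b * y + c * y ^ 2 = 0 →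
      a + b * z + c * z ^ 2 = 0 → x ≠ y → x ≠ z → y ≠ z → False := by
    intro x y z h1 h2 h3 hxy hxz hyz
    apply hc
    have e1 : (x - y) * (b + c * (x + y)) = 0 := by linear_combination h1 - h2
    have e2 : (x - z) * (b + c * (x + z)) = 0 := by linear_combination h1 - h3
    have f1 : b + c * (x + y) = 0 := by
      rcases mul_eq_zero.mp e1 with h | h
      · exact absurd (sub_eq_zero.mp h) hxy
      · exact h
    have f2 : b + c * (x + z) = 0 := by
      rcases mul_eq_zero.mp e2 with h | h
      · exact absurd (sub_eq_zero.mp h) hxz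
      · exact h
    have e3 : c * (y - z) = 0 := by linear_combination f1 - f2
    rcases mul_eq_zero.mp e3 with h | h
    · exact h
    · exact absurd (sub_eq_zero.mp h) hyz
  have d01 : (0 : k) ≠ 1 := fun h => one_ne_zero (α := k) h.symm
  have d02 : (0 : k) ≠ 2 := fun h => hk2 h.symm
  have d03 : (0 : k) ≠ 3 := fun h => hk3 h.symm
  have d12 : (1 : k) ≠ 2 := by
    intro h
    apply one_ne_zero (α := k)
    linear_combination -h
  have d13 : (1 : k) ≠ 3 := by
    intro h
    apply hk2
    linear_combination -h
  have d23 : (2 : k) ≠ 3 := by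
    intro h
    apply one_ne_zero (α := k)
    linear_combination -h
  by_cases hp0 : a + b * 0 + c * 0 ^ 2 = 0 <;>
    by_cases hp1 : a + b * 1 + c * 1 ^ 2 = 0 <;>
    by_cases hp2 : a + b * 2 + c * 2 ^ 2 = 0 <;>
    by_cases hp3 : a + b * 3 + c * 3 ^ 2 = 0
  all_goals first
    | exact ⟨0, 1, d01, hp0, hp1⟩
    | exact ⟨0, 2, d02, hp0, hp2⟩
    | exact ⟨0, 3, d03, hp0, hp3⟩
    | exact ⟨1, 2, d12, hp1, hp2⟩
    | exact ⟨1, 3, d13, hp1, hp3⟩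
    | exact ⟨2, 3, d23, hp2, hp3⟩
    | exact (vand 0 1 2 hp0 hp1 hp2 d01 d02 d12).elim
    | exact (vand 0 1 3 hp0 hp1 hp3 d01 d03 d13).elim
    | exact (vand 0 2 3 hp0 hp2 hp3 d02 d03 d23).elim
    | exact (vand 1 2 3 hp1 hp2 hp3 d12 d13 d23).elim

/-- A product algebra is finite-dimensional. -/
theorem ProductAlgebraSplitting.finiteDimensional {k : Type u} [Field k]
    {A : AlgebraWithInvolution k} {m₁ m₂ : ℕ} (P : ProductAlgebraSplitting A m₁ m₂) :
    FiniteDimensional k A.carrier := by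
  have e : (P.K ⊗[k] A.carrier) ≃ₗ[P.K] (P.C₁.carrier ⊗[P.K] P.C₂.carrier) :=
    P.iso.toLinearEquiv
  have h1 : FiniteDimensional P.K (P.C₁.carrier ⊗[P.K] P.C₂.carrier) :=
    Module.Finite.tensorProduct _ _ _
  have h2 : FiniteDimensional P.K (P.K ⊗[k] A.carrier) := Module.Finite.equiv e.symm
  have h3 := Module.rank_lt_aleph0_iff.mpr h2
  rw [Module.rank_baseChange, Cardinal.lift_lt_aleph0] at h3
  exact Module.rank_lt_aleph0_iff.mp h3

end MoreLemmas

section NatMapZero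

open scoped TensorProduct

namespace AlgebraWithInvolution

variable {k : Type u} [Field k]

theorem skew_invol {A : AlgebraWithInvolution k} (s : A.skew) :
    A.invol (s : A.carrier) = -(s : A.carrier) := s.2

/-- The projection onto the skew part. -/
def skewProj (A : AlgebraWithInvolution k) : A.carrier →ₗ[k] A.skew :=
  LinearMap.codRestrict A.skew ((2 : k)⁻¹ • (LinearMap.id - A.invol)) (by
    intro a
    show A.invol _ = -_
    simp only [LinearMap.smul_apply, LinearMap.sub_apply, LinearMap.id_apply, map_smul,
      map_sub, A.invol_invol]
    rw [← smul_neg, neg_sub])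

theorem skewProj_coe (A : AlgebraWithInvolution k) (a : A.carrier) :
    (A.skewProj a : A.carrier) = (2 : k)⁻¹ • (a - A.invol a) := rfl

theorem skewProj_of_skew {A : AlgebraWithInvolution k} (hk2 : (2 : k) ≠ 0) (s : A.skew) :
    A.skewProj (s : A.carrier) = s := by
  apply Subtype.ext
  rw [skewProj_coe, skew_invol, sub_neg_eq_add, ← two_smul k, smul_smul,
    inv_mul_cancel₀ hk2, one_smul]

end AlgebraWithInvolution

set_option maxHeartbeats 1000000 in
/-- If the Albert form is identically zero, the `♮`-map vanishes. -/
theorem natMap_eq_zero {k : Type u} [Field k] (hk2 : (2 : k) ≠ 0)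
    {A : AlgebraWithInvolution k} {m₁ m₂ : ℕ} (P : ProductAlgebraSplitting A m₁ m₂)
    (Φ : AlbertForm A) (hQ : ∀ s, Φ.Q s = 0) (s : A.skew) : Φ.natMap s = 0 := by
  classical
  have hK2 : (2 : P.K) ≠ 0 := by
    intro h
    apply hk2
    have h2 : (algebraMap k P.K) 2 = (algebraMap k P.K) 0 := by
      rw [map_ofNat, map_zero, h]
    simpa using (algebraMap k P.K).injective h2
  -- the identities over k
  have hmul0 : ∀ (u : A.skew) (a : A.carrier),
      (u : A.carrier) * ((Φ.natMap u : A.carrier) * a) = 0 := by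
    intro u a
    have h := Φ.mul_natMap u a
    rw [hQ u] at h
    simpa using h
  have hpol : ∀ (u v : A.skew) (a : A.carrier),
      (u : A.carrier) * ((Φ.natMap v : A.carrier) * a)
        + (v : A.carrier) * ((Φ.natMap u : A.carrier) * a) = 0 := by
    intro u v a
    have h1 := hmul0 (u + v) a
    simp only [Submodule.coe_add, map_add, add_mul, mul_add] at h1
    have h2 := hmul0 u a
    have h3 := hmul0 v a
    linear_combination (norm := module) h1 - h2 - h3
  -- base change
  let ι : P.K ⊗[k] A.skew →ₗ[P.K] P.K ⊗[k] A.carrier :=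
    LinearMap.baseChange P.K A.skew.subtype
  let ν : P.K ⊗[k] A.skew →ₗ[P.K] P.K ⊗[k] A.skew :=
    LinearMap.baseChange P.K Φ.natMap
  have step2 : ∀ (σ τ : P.K ⊗[k] A.skew) (a : P.K ⊗[k] A.carrier),
      (ι σ) * ((ι (ν τ)) * a) + (ι τ) * ((ι (ν σ)) * a) = 0 := by
    intro σ τ a
    induction σ with
    | zero => simp
    | add u v hu hv =>
      simp only [map_add, add_mul, mul_add]
      linear_combination (norm := module) hu + hv
    | tmul x u =>
      induction τ with
      | zero => simp
      | add w v hw hv =>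
        simp only [map_add, add_mul, mul_add]
        linear_combination (norm := module) hw + hv
      | tmul y v =>
        induction a with
        | zero => simp
        | add a b ha hb =>
          simp only [mul_add]
          linear_combination (norm := module) ha + hb
        | tmul z c =>
          simp only [ι, ν, LinearMap.baseChange_tmul,
            Algebra.TensorProduct.tmul_mul_tmul, Submodule.subtype_apply]
          rw [show y * (x * z) = x * (y * z) by ring, ← TensorProduct.tmul_add,
            hpol u v c, TensorProduct.tmul_zero]
    -- end step2
  have hιinv : ∀ z : P.K ⊗[k] A.skew,
      (LinearMap.baseChange P.K A.skewProj) (ι z) = z := by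
    intro z
    have hcomp : (A.skewProj ∘ₗ A.skew.subtype) = LinearMap.id := by
      ext w
      simp [AlgebraWithInvolution.skewProj_of_skew hk2]
    have := congrFun (congrArg DFunLike.coe
      ((LinearMap.baseChange_comp (A := P.K) A.skew.subtype A.skewProj).symm)) z
    rw [hcomp, LinearMap.baseChange_id] at this
    simpa [ι] using this
  have hιinj : Function.Injective ι := by
    intro z₁ z₂ h
    have := congrArg (LinearMap.baseChange P.K A.skewProj) h
    rwa [hιinv, hιinv] at this
  -- the isomorphism
  let φ : (P.K ⊗[k] A.carrier) ≃ₗ[P.K] (P.C₁.carrier ⊗[P.K] P.C₂.carrier) :=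
    P.iso.toLinearEquiv
  have φmul : ∀ x y : P.K ⊗[k] A.carrier, φ (x * y) = φ x * φ y := P.iso.map_mul
  have φinvol : ∀ x : P.K ⊗[k] A.carrier,
      φ (LinearMap.baseChange P.K A.invol x)
        = TensorProduct.map P.C₁.conj P.C₂.conj (φ x) := P.iso.map_invol
  -- skew elements of the base change lift along ι
  have hlift : ∀ z : P.K ⊗[k] A.carrier, LinearMap.baseChange P.K A.invol z = -z →
      ι ((LinearMap.baseChange P.K A.skewProj) z) = z := by
    intro z hz
    have hgen : ∀ w : P.K ⊗[k] A.carrier,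
        ι ((LinearMap.baseChange P.K A.skewProj) w)
          = (2 : P.K)⁻¹ • (w - LinearMap.baseChange P.K A.invol w) := by
      intro w
      induction w with
      | zero => simp
      | tmul x a =>
        simp only [ι, LinearMap.baseChange_tmul]
        rw [show (A.skew.subtype) (A.skewProj a) = (2 : k)⁻¹ • (a - A.invol a) from rfl]
        rw [TensorProduct.tmul_smul, TensorProduct.tmul_sub]
        rw [← algebraMap_smul P.K ((2 : k)⁻¹), map_inv₀, map_ofNat]
      | add u v hu hv =>
        simp only [map_add, hu, hv, smul_sub, smul_add]
        abel
    rw [hgen z, hz, sub_neg_eq_add, ← two_smul P.K z, smul_smul,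
      inv_mul_cancel₀ hK2, one_smul]
  -- each anisotropic generator comes from the kernel of ν
  have hgen_ker : ∀ g ∈ CompositionAlgebra.anisoSet P.C₁ P.C₂,
      ∃ τ : P.K ⊗[k] A.skew, ν τ = 0 ∧ φ (ι τ) = g := by
    intro g hg
    have hskewg : TensorProduct.map P.C₁.conj P.C₂.conj g = -g := by
      rcases hg with ⟨x, hx1, _, rfl⟩ | ⟨y, hy1, _, rfl⟩
      · rw [TensorProduct.map_tmul, hx1, P.C₂.conj_one, TensorProduct.neg_tmul]
      · rw [TensorProduct.map_tmul, hy1, P.C₁.conj_one, TensorProduct.tmul_neg]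
    have hskew : LinearMap.baseChange P.K A.invol (φ.symm g) = -(φ.symm g) := by
      apply φ.injective
      rw [φinvol (φ.symm g), map_neg, φ.apply_symm_apply, hskewg]
    have hιτ : ι ((LinearMap.baseChange P.K A.skewProj) (φ.symm g)) = φ.symm g :=
      hlift (φ.symm g) hskew
    set τ := (LinearMap.baseChange P.K A.skewProj) (φ.symm g) with hτdef
    have hzero : ∀ b : P.C₁.carrier ⊗[P.K] P.C₂.carrier, g * (φ (ι (ν τ)) * b) = 0 := by
      intro b
      have h1 := step2 τ τ (φ.symm b)
      have h2 : (ι τ) * ((ι (ν τ)) * (φ.symm b)) = 0 := by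
        rw [← two_smul P.K] at h1
        rcases smul_eq_zero.mp h1 with h | h
        · exact absurd h hK2
        · exact h
      have h3 := congrArg φ h2
      rw [map_zero, φmul, φmul, hιτ, φ.apply_symm_apply, φ.apply_symm_apply] at h3
      exact h3
    have hinj : Function.Injective
        (fun z : P.C₁.carrier ⊗[P.K] P.C₂.carrier => g * z) := by
      rcases hg with ⟨x, hx1, hx2, rfl⟩ | ⟨y, hy1, hy2, rfl⟩
      · exact CompositionAlgebra.tmul_one_mul_injective P.C₁ P.C₂ hx2
      · exact CompositionAlgebra.one_tmul_mul_injective P.C₁ P.C₂ hy2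
    have hW0 : φ (ι (ν τ)) = 0 := by
      have hWb : ∀ b, φ (ι (ν τ)) * b = 0 := by
        intro b
        apply hinj
        show g * (φ (ι (ν τ)) * b) = g * 0
        rw [mul_zero]
        exact hzero b
      have := hWb 1
      rwa [mul_one] at this
    have hιν : ι (ν τ) = 0 := by
      apply φ.injective
      rw [hW0, map_zero]
    refine ⟨τ, ?_, by rw [hιτ, φ.apply_symm_apply]⟩
    apply hιinj
    rw [hιν, map_zero]
  -- span argument
  let ψ : P.K ⊗[k] A.skew →ₗ[P.K] P.C₁.carrier ⊗[P.K] P.C₂.carrier :=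
    (φ.toLinearMap) ∘ₗ ι
  have hψinj : Function.Injective ψ := by
    intro z₁ z₂ h
    exact hιinj (φ.injective h)
  have hσ₀skew : TensorProduct.map P.C₁.conj P.C₂.conj (ψ ((1 : P.K) ⊗ₜ[k] s))
      = -(ψ ((1 : P.K) ⊗ₜ[k] s)) := by
    have h1 : LinearMap.baseChange P.K A.invol (ι ((1 : P.K) ⊗ₜ[k] s))
        = -(ι ((1 : P.K) ⊗ₜ[k] s)) := by
      simp only [ι, LinearMap.baseChange_tmul, Submodule.subtype_apply]
      rw [AlgebraWithInvolution.skew_invol s]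
      simp [TensorProduct.tmul_neg, TensorProduct.neg_tmul]
    have h2 : ψ ((1 : P.K) ⊗ₜ[k] s) = φ (ι ((1 : P.K) ⊗ₜ[k] s)) := rfl
    rw [h2, ← φinvol, h1, map_neg]
  have hspan := CompositionAlgebra.skew_tensor_mem_span P.C₁ P.C₂ hK2 hσ₀skew
  have hle : Submodule.span P.K (CompositionAlgebra.anisoSet P.C₁ P.C₂)
      ≤ Submodule.map ψ (LinearMap.ker ν) := by
    rw [Submodule.span_le]
    intro g hg
    obtain ⟨τ, hτ0, hτg⟩ := hgen_ker g hg
    exact ⟨τ, LinearMap.mem_ker.mpr hτ0, hτg⟩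
  obtain ⟨τ', hτ'ker, hτ'eq⟩ := hle hspan
  have hτ'σ : τ' = (1 : P.K) ⊗ₜ[k] s := hψinj hτ'eq
  have hνσ₀ : ν ((1 : P.K) ⊗ₜ[k] s) = 0 := by
    rw [← hτ'σ]
    exact LinearMap.mem_ker.mp hτ'ker
  have h1s : (1 : P.K) ⊗ₜ[k] (Φ.natMap s) = (0 : P.K ⊗[k] A.skew) := by
    simpa [ν, LinearMap.baseChange_tmul] using hνσ₀
  obtain ⟨g, hg⟩ := (Algebra.linearMap k P.K).exists_leftInverse_of_injective (by
    rw [LinearMap.ker_eq_bot]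
    exact fun a b h => (algebraMap k P.K).injective h)
  have hg1 : g 1 = 1 := by
    have := LinearMap.congr_fun hg 1
    simpa using this
  have := congrArg
    (fun z => (TensorProduct.lid k A.skew) ((LinearMap.rTensor A.skew g) z)) h1s
  simpa [TensorProduct.lid_tmul, hg1] using this

end NatMapZero

section KeyLemma

set_option maxHeartbeats 1000000 in
/-- The key identity `L_{s♮} ∘ L_s = −Q(s)·id`. -/
theorem natMap_mul_mul {k : Type u} [Field k] (hk2 : (2 : k) ≠ 0) (hk3 : (3 : k) ≠ 0)
    {A : AlgebraWithInvolution k} {m₁ m₂ : ℕ} (P : ProductAlgebraSplitting A m₁ m₂)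
    (Φ : AlbertForm A) (s : A.skew) (a : A.carrier) :
    (Φ.natMap s : A.carrier) * ((s : A.carrier) * a) = -(Φ.Q s) • a := by
  have hfin : FiniteDimensional k A.carrier := P.finiteDimensional
  by_cases hQ0 : ∀ u : A.skew, Φ.Q u = 0
  · rw [natMap_eq_zero hk2 P Φ hQ0 s, hQ0 s]
    simp
  · have aniso : ∀ u : A.skew, Φ.Q u ≠ 0 → ∀ b : A.carrier,
        (Φ.natMap u : A.carrier) * ((u : A.carrier) * b) = -(Φ.Q u) • b := by
      intro u hu b
      have hsurj : Function.Surjective (LinearMap.mulLeft k (u : A.carrier)) := by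
        intro w
        refine ⟨(-(Φ.Q u))⁻¹ • ((Φ.natMap u : A.carrier) * w), ?_⟩
        show (u : A.carrier) * _ = w
        rw [mul_smul_comm, Φ.mul_natMap u w, smul_smul,
          inv_mul_cancel₀ (neg_ne_zero.mpr hu), one_smul]
      have hinj : Function.Injective (LinearMap.mulLeft k (u : A.carrier)) :=
        (LinearMap.injective_iff_surjective).mpr hsurj
      apply hinj
      show (u : A.carrier) * _ = (u : A.carrier) * _
      rw [Φ.mul_natMap u ((u : A.carrier) * b), mul_smul_comm]
    push_neg at hQ0
    obtain ⟨t, ht⟩ := hQ0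
    have hexp : ∀ x : k, Φ.Q (s + x • t)
        = Φ.Q s + QuadraticMap.polar Φ.Q s t * x + Φ.Q t * x ^ 2 := by
      intro x
      have h1 : Φ.Q (s + x • t)
          = Φ.Q s + Φ.Q (x • t) + QuadraticMap.polar Φ.Q s (x • t) := by
        simp [QuadraticMap.polar]
        try ring
      rw [h1, QuadraticMap.polar_smul_right, QuadraticMap.map_smul]
      simp [smul_eq_mul]
      try ring
    obtain ⟨x₀, x₁, hne01, hx0, hx1⟩ := exists_two_lambda hk2 hk3 (Φ.Q s)
      (QuadraticMap.polar Φ.Q s t) (Φ.Q t) ht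
    rw [← hexp x₀] at hx0
    rw [← hexp x₁] at hx1
    have heq : ∀ x : k, Φ.Q (s + x • t) ≠ 0 →
        ((Φ.natMap s : A.carrier) * ((s : A.carrier) * a) + Φ.Q s • a)
          + x • ((Φ.natMap s : A.carrier) * ((t : A.carrier) * a)
              + (Φ.natMap t : A.carrier) * ((s : A.carrier) * a)
              + QuadraticMap.polar Φ.Q s t • a) = 0 := by
      intro x hx
      have h1 := aniso (s + x • t) hx a
      have h2 := aniso t ht a
      rw [hexp x] at h1
      simp only [map_add, map_smul, Submodule.coe_add, Submodule.coe_smul,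
        add_mul, mul_add, smul_mul_assoc, mul_smul_comm] at h1
      linear_combination (norm := module) h1 - (x * x) • h2
    have hU := heq x₀ hx0
    have hV := heq x₁ hx1
    have hsub : (x₀ - x₁) • ((Φ.natMap s : A.carrier) * ((t : A.carrier) * a)
        + (Φ.natMap t : A.carrier) * ((s : A.carrier) * a)
        + QuadraticMap.polar Φ.Q s t • a) = 0 := by
      linear_combination (norm := module) hU - hV
    have hVzero : (Φ.natMap s : A.carrier) * ((t : A.carrier) * a)
        + (Φ.natMap t : A.carrier) * ((s : A.carrier) * a)
        + QuadraticMap.polar Φ.Q s t • a = 0 := by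
      rcases smul_eq_zero.mp hsub with h | h
      · exact absurd (sub_eq_zero.mp h) hne01
      · exact h
    have hfinal : (Φ.natMap s : A.carrier) * ((s : A.carrier) * a) + Φ.Q s • a = 0 := by
      have h5 := hU
      rw [hVzero, smul_zero, add_zero] at h5
      exact h5
    linear_combination (norm := module) hfinal

end KeyLemma
/-- Let `k` be a field of characteristic not 2 or 3 and let `(A,−)` be an
`(m₁,m₂)`-product algebra with skew space `S`, Albert form `Q` and `♮`-map.  There is a unique
`k`-algebra homomorphism `θ : C⁺(S,Q) → End_k(A)` from the even Clifford algebra with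
`θ(st) = −L_s ∘ L_{t♮}` for all `s, t ∈ S`. -/
theorem even_clifford_representation
    {k : Type u} [Field k] (hk2 : (2 : k) ≠ 0) (hk3 : (3 : k) ≠ 0)
    (m₁ m₂ : ℕ) (hm₁ : m₁ ∈ ({1, 2, 4, 8} : Set ℕ)) (hm₂ : m₂ ∈ ({1, 2, 4, 8} : Set ℕ))
    (hne : (m₁, m₂) ≠ (2, 2))
    (A : AlgebraWithInvolution k) (hA : IsProductAlgebra A m₁ m₂)
    (Φ : AlbertForm A) :
    ∃! θ : ↥(CliffordAlgebra.even Φ.Q) →ₐ[k] Module.End k A.carrier,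
      ∀ s t : A.skew,
        θ ((CliffordAlgebra.even.ι Φ.Q).bilin s t) =
          -((LinearMap.mulLeft k (s : A.carrier)) ∘ₗ
              (LinearMap.mulLeft k ((Φ.natMap t : A.skew) : A.carrier))) := by
  obtain ⟨P⟩ := hA
  have key : ∀ (u : A.skew) (b : A.carrier),
      (Φ.natMap u : A.carrier) * ((u : A.carrier) * b) = -(Φ.Q u) • b :=
    fun u b => natMap_mul_mul hk2 hk3 P Φ u b
  let f1 : A.skew →ₗ[k] Module.End k A.carrier :=
    (LinearMap.mul k A.carrier) ∘ₗ A.skew.subtype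
  let f2 : A.skew →ₗ[k] Module.End k A.carrier := f1 ∘ₗ Φ.natMap
  let Bl : A.skew →ₗ[k] A.skew →ₗ[k] Module.End k A.carrier :=
    -((LinearMap.mul k (Module.End k A.carrier)).compl₁₂ f1 f2)
  have hBlap : ∀ (u v : A.skew) (b : A.carrier),
      (Bl u v) b = -((u : A.carrier) * ((Φ.natMap v : A.carrier) * b)) := by
    intro u v b
    simp [Bl, f1, f2, LinearMap.compl₁₂_apply, LinearMap.mul_apply',
      Module.End.mul_apply]
  have hBl : ∀ (u v : A.skew), Bl u v
      = -((LinearMap.mulLeft k (u : A.carrier)) ∘ₗ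
          (LinearMap.mulLeft k ((Φ.natMap v : A.skew) : A.carrier))) := by
    intro u v
    ext b
    rw [hBlap u v b]
    simp [LinearMap.mulLeft_apply]
  let fE : CliffordAlgebra.EvenHom Φ.Q (Module.End k A.carrier) :=
    { bilin := Bl
      contract := by
        intro m
        ext b
        rw [hBlap m m b, Φ.mul_natMap m b]
        simp [Module.algebraMap_end_apply]
      contract_mid := by
        intro m₁ m₂ m₃
        ext b
        rw [Module.End.mul_apply, LinearMap.smul_apply]
        rw [hBlap m₂ m₃ b, map_neg, hBlap m₁ m₂, hBlap m₁ m₃]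
        rw [key m₂ ((Φ.natMap m₃ : A.carrier) * b), mul_smul_comm]
        simp [smul_smul]
      }
  refine ⟨CliffordAlgebra.even.lift Φ.Q fE, ?_, ?_⟩
  · intro u v
    rw [CliffordAlgebra.even.lift_ι]
    exact hBl u v
  · intro θ' hθ'
    apply CliffordAlgebra.even.algHom_ext
    apply CliffordAlgebra.EvenHom.ext
    ext u v b
    simp only [CliffordAlgebra.EvenHom.compr₂_bilin, LinearMap.compr₂_apply,
      AlgHom.toLinearMap_apply]
    rw [hθ' u v, CliffordAlgebra.even.lift_ι, hBl u v]
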